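/- If G = (S, 𝓕) is a local forest greedoid with rank function r and c : S → ℤ is a non-negative integer valued weight function, then the linear program min{ Σ_{s∈S} c(s)x(s) : x ∈ ℝ^S, x(U) ≥ r(S) − r(S \ U) for all U ⊆ S } and its dual max{ Σ_{U⊆S} y(U)(r(S) − r(S \ U)) : Σ{y(U) : s ∈ U} = c(s) for all s ∈ S, y(U) ≥ 0 for all U ⊆ S } both attain their optimum at integer vectors. -/

import Mathlib

open Finset

variable {α : Type*} [DecidableEq α] [Fintype α]

/-- `X` is subfeasible: contained in some feasible set. -/
def Subfeasible (F : Set (Finset α)) (X : Finset α) : Prop :=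
  ∃ Y ∈ F, X ⊆ Y

/-- Greedoid axioms: `∅` is feasible, and the exchange property. -/
def IsGreedoid (F : Set (Finset α)) : Prop :=
  (∅ : Finset α) ∈ F ∧
    ∀ X ∈ F, ∀ Y ∈ F, X.card < Y.card → ∃ y ∈ Y, y ∉ X ∧ insert y X ∈ F

/-- Local union property. -/
def LocalUnion (F : Set (Finset α)) : Prop :=
  ∀ A ∈ F, ∀ B ∈ F, Subfeasible F (A ∪ B) → A ∪ B ∈ F

/-- Local intersection property. -/
def LocalInter (F : Set (Finset α)) : Prop :=
  ∀ A ∈ F, ∀ B ∈ F, Subfeasible F (A ∪ B) → A ∩ B ∈ F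

/-- Local forest property. -/
def LocalForest (F : Set (Finset α)) : Prop :=
  ∀ A ∈ F, ∀ x y z : α,
    insert x A ∈ F → insert y A ∈ F → insert x (insert y A) ∈ F →
      insert z (insert x (insert y A)) ∈ F →
      insert z (insert x A) ∈ F ∨ insert z (insert y A) ∈ F

/-- The rank function of a greedoid: max cardinality of a feasible subset. -/
noncomputable def grank (F : Set (Finset α)) (A : Finset α) : ℕ :=
  sSup {n : ℕ | ∃ X ∈ F, X ⊆ A ∧ X.card = n}

/-- A base: a feasible set of maximum size. -/
def IsBase (F : Set (Finset α)) (B : Finset α) : Prop :=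
  B ∈ F ∧ ∀ C ∈ F, C.card ≤ B.card

/-- The set of continuations of a feasible set `A`. -/
def Gamma (F : Set (Finset α)) (A : Finset α) : Set α :=
  {x | x ∉ A ∧ insert x A ∈ F}

/-- `P` is the `x`-path in `A`: the unique inclusion-minimal feasible subset
of `A` containing `x`. -/
def IsPathIn (F : Set (Finset α)) (A : Finset α) (x : α) (P : Finset α) : Prop :=
  P ∈ F ∧ P ⊆ A ∧ x ∈ P ∧ ∀ Q ∈ F, Q ⊆ A → x ∈ Q → P ⊆ Q

/-- `P` is a path. -/
def IsPath (F : Set (Finset α)) (P : Finset α) : Prop :=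
  ∃ A ∈ F, ∃ x ∈ A, IsPathIn F A x P

/-- `l` is a feasible ordering (of the set of its elements): every prefix is feasible. -/
def FeasibleOrdering (F : Set (Finset α)) (l : List α) : Prop :=
  l.Nodup ∧ ∀ i : ℕ, (l.take i).toFinset ∈ F

/-- `B` is a greedy base for maximizing `w`. -/
def GreedyMaxBase (F : Set (Finset α)) (w : Finset α → ℝ) (B : Finset α) : Prop :=
  IsBase F B ∧ ∃ l : List α, FeasibleOrdering F l ∧ l.toFinset = B ∧
    ∀ (i : ℕ) (hi : i < l.length), ∀ y ∈ Gamma F (l.take i).toFinset,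
      w (insert y (l.take i).toFinset) ≤ w (insert (l.get ⟨i, hi⟩) (l.take i).toFinset)

/-- `B` is a greedy base for minimizing `w`. -/
def GreedyMinBase (F : Set (Finset α)) (w : Finset α → ℝ) (B : Finset α) : Prop :=
  IsBase F B ∧ ∃ l : List α, FeasibleOrdering F l ∧ l.toFinset = B ∧
    ∀ (i : ℕ) (hi : i < l.length), ∀ y ∈ Gamma F (l.take i).toFinset,
      w (insert (l.get ⟨i, hi⟩) (l.take i).toFinset) ≤ w (insert y (l.take i).toFinset)

/-- The shadow vector of a feasible set `B`: `sh_B(x) = |B| - r(B \ {x})`. -/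
noncomputable def shVec (F : Set (Finset α)) (B : Finset α) : α → ℝ :=
  fun x => (B.card : ℝ) - (grank F (B.erase x) : ℝ)

set_option linter.unusedSectionVars false

open Classical in
noncomputable instance (F : Set (Finset α)) : DecidablePred (· ∈ F) := fun _ => Classical.dec _

section Lemmas

variable {F : Set (Finset α)}

lemma grank_exists (A : Finset α) (hG : IsGreedoid F) :
    ∃ X ∈ F, X ⊆ A ∧ X.card = grank F A := by
  have hne : ({n : ℕ | ∃ X ∈ F, X ⊆ A ∧ X.card = n}).Nonempty :=
    ⟨0, ∅, hG.1, by simp⟩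
  have hbdd : BddAbove {n : ℕ | ∃ X ∈ F, X ⊆ A ∧ X.card = n} := by
    refine ⟨A.card, ?_⟩
    rintro n ⟨X, hX, hsub, rfl⟩
    exact Finset.card_le_card hsub
  have := Nat.sSup_mem hne hbdd
  exact this

lemma card_le_grank {A X : Finset α} (hX : X ∈ F) (hsub : X ⊆ A) :
    X.card ≤ grank F A := by
  have hbdd : BddAbove {n : ℕ | ∃ X ∈ F, X ⊆ A ∧ X.card = n} := by
    refine ⟨A.card, ?_⟩
    rintro n ⟨X, hX, hsub, rfl⟩
    exact Finset.card_le_card hsub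
  exact le_csSup hbdd ⟨X, hX, hsub, rfl⟩

lemma grank_mono (hG : IsGreedoid F) {A B : Finset α} (h : A ⊆ B) :
    grank F A ≤ grank F B := by
  obtain ⟨X, hX, hsub, hcard⟩ := grank_exists A hG
  rw [← hcard]
  exact card_le_grank hX (hsub.trans h)

lemma grank_le (hG : IsGreedoid F) {A : Finset α} {m : ℕ}
    (h : ∀ X ∈ F, X ⊆ A → X.card ≤ m) : grank F A ≤ m := by
  obtain ⟨X, hX, hsub, hcard⟩ := grank_exists A hG
  rw [← hcard]; exact h X hX hsub

/-- chain lemma: from a proper feasible subset we can remove an element of `Y`. -/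
lemma exists_erase (hG : IsGreedoid F) {X Y : Finset α} (hX : X ∈ F) (hY : Y ∈ F)
    (hsub : X ⊆ Y) (hne : X ≠ Y) : ∃ w ∈ Y, w ∉ X ∧ Y.erase w ∈ F := by
  have main : ∀ n (X : Finset α), X ∈ F → X ⊆ Y → X ≠ Y → Y.card - X.card = n →
      ∃ w ∈ Y, w ∉ X ∧ Y.erase w ∈ F := by
    intro n
    induction n using Nat.strong_induction_on with
    | _ n ih =>
      intro X hX hsub hne hn
      have hlt : X.card < Y.card := Finset.card_lt_card (lt_of_le_of_ne hsub hne)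
      obtain ⟨y, hyY, hyX, hins⟩ := hG.2 X hX Y hY hlt
      by_cases hcase : Y.card = X.card + 1
      · refine ⟨y, hyY, hyX, ?_⟩
        have : insert y X = Y := by
          apply Finset.eq_of_subset_of_card_le
          · exact Finset.insert_subset hyY hsub
          · rw [Finset.card_insert_of_notMem hyX, hcase]
        have hXY : X = Y.erase y := by
          rw [← this, Finset.erase_insert hyX]
        rw [← hXY]; exact hX
      · have hsub' : insert y X ⊆ Y := Finset.insert_subset hyY hsub
        have hne' : insert y X ≠ Y := by
          intro hEq
          apply hcase
          rw [← hEq, Finset.card_insert_of_notMem hyX]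
        obtain ⟨w, hwY, hwX, hres⟩ := ih (Y.card - (insert y X).card)
          (by rw [Finset.card_insert_of_notMem hyX]; omega)
          (insert y X) hins hsub' hne' rfl
        exact ⟨w, hwY, fun hw => hwX (Finset.mem_insert_of_mem hw), hres⟩
  exact main _ X hX hsub hne rfl

end Lemmas

section Paths

variable {F : Set (Finset α)}

lemma exists_isPathIn (hI : LocalInter F) {X : Finset α} {x : α}
    (hX : X ∈ F) (hx : x ∈ X) : ∃ P, IsPathIn F X x P := by
  classical
  set D := X.powerset.filter (fun Q => Q ∈ F ∧ x ∈ Q) with hD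
  have hXD : X ∈ D := by
    simp only [hD, Finset.mem_filter, Finset.mem_powerset]
    exact ⟨le_refl X, hX, hx⟩
  obtain ⟨P, hPD, hPmin⟩ := D.exists_min_image (fun Q => Q.card) ⟨X, hXD⟩
  simp only [hD, Finset.mem_filter, Finset.mem_powerset] at hPD
  refine ⟨P, hPD.2.1, hPD.1, hPD.2.2, ?_⟩
  intro Q hQ hQX hxQ
  have hQD : Q ∈ D := by
    simp only [hD, Finset.mem_filter, Finset.mem_powerset]; exact ⟨hQX, hQ, hxQ⟩
  have hint : P ∩ Q ∈ F := by
    apply hI P hPD.2.1 Q hQ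
    exact ⟨X, hX, Finset.union_subset hPD.1 hQX⟩
  have hintD : P ∩ Q ∈ D := by
    simp only [hD, Finset.mem_filter, Finset.mem_powerset]
    exact ⟨(Finset.inter_subset_left).trans hPD.1, hint, Finset.mem_inter.2 ⟨hPD.2.2, hxQ⟩⟩
  have hle := hPmin _ hintD
  have hsub : P ∩ Q ⊆ P := Finset.inter_subset_left
  have : P ∩ Q = P := Finset.eq_of_subset_of_card_le hsub hle
  rw [← this]
  exact Finset.inter_subset_right

open Classical in
noncomputable def gpath (F : Set (Finset α)) (X : Finset α) (x : α) : Finset α :=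
  if h : ∃ P, IsPathIn F X x P then h.choose else ∅

lemma gpath_spec (hI : LocalInter F) {X : Finset α} {x : α}
    (hX : X ∈ F) (hx : x ∈ X) : IsPathIn F X x (gpath F X x) := by
  have h := exists_isPathIn hI hX hx
  rw [gpath, dif_pos h]
  exact h.choose_spec

/-- paths are stable under feasible enlargement of the ambient set -/
lemma gpath_stable (hI : LocalInter F) {X X' : Finset α} {x : α}
    (hX : X ∈ F) (hX' : X' ∈ F) (hsub : X ⊆ X') (hx : x ∈ X) :
    gpath F X' x = gpath F X x := by
  obtain ⟨hP'F, hP'X, hxP', hP'min⟩ := gpath_spec hI hX' (hsub hx)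
  obtain ⟨hPF, hPX, hxP, hPmin⟩ := gpath_spec hI hX hx
  apply Finset.Subset.antisymm
  · exact hP'min _ hPF (hPX.trans hsub) hxP
  · have hint : gpath F X x ∩ gpath F X' x ∈ F := by
      apply hI _ hPF _ hP'F
      exact ⟨X', hX', Finset.union_subset (hPX.trans hsub) hP'X⟩
    have hsubX : gpath F X x ∩ gpath F X' x ⊆ X := Finset.inter_subset_left.trans hPX
    have := hPmin _ hint hsubX (Finset.mem_inter.2 ⟨hxP, hxP'⟩)
    exact fun a ha => (Finset.mem_inter.1 (this ha)).2

lemma gpath_trans (hI : LocalInter F) {X : Finset α} {x y : α}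
    (hX : X ∈ F) (hx : x ∈ X) (hy : y ∈ gpath F X x) :
    gpath F X y ⊆ gpath F X x := by
  obtain ⟨hPF, hPX, hxP, hPmin⟩ := gpath_spec hI hX hx
  have := gpath_stable hI hPF hX hPX hy
  rw [this]
  exact (gpath_spec hI hPF hy).2.1

/-- the new element is the last one of its path: removing it stays feasible -/
lemma gpath_erase (hG : IsGreedoid F) (hI : LocalInter F) {C : Finset α} {s : α}
    (hC : C ∈ F) (hs : s ∉ C) (hins : insert s C ∈ F) :
    (gpath F (insert s C) s).erase s ∈ F := by
  obtain ⟨hPF, hPX, hsP, hPmin⟩ := gpath_spec hI hins (Finset.mem_insert_self s C)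
  obtain ⟨w, hwP, hw0, hres⟩ := exists_erase hG hG.1 hPF (Finset.empty_subset _)
    (fun h => by rw [← h] at hsP; exact Finset.notMem_empty s hsP)
  by_cases hws : w = s
  · subst hws; exact hres
  · exfalso
    have hsub : (gpath F (insert s C) s).erase w ⊆ insert s C :=
      (Finset.erase_subset _ _).trans hPX
    have hsmem : s ∈ (gpath F (insert s C) s).erase w :=
      Finset.mem_erase.2 ⟨fun h => hws h.symm, hsP⟩
    have := hPmin _ hres hsub hsmem
    exact (Finset.mem_erase.1 (this hwP)).1 rfl

end Paths

section Key

variable {F : Set (Finset α)}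

set_option maxHeartbeats 1000000 in
/-- KEY structural lemma: if `s` becomes attachable exactly when `t` is added,
then the path of `s` is the path of `t` plus `s`. -/
lemma key_lemma (hG : IsGreedoid F) (hU : LocalUnion F) (hI : LocalInter F)
    (hLF : LocalForest F) {A' : Finset α} {t s : α}
    (hA' : A' ∈ F) (ht : t ∉ A') (hA : insert t A' ∈ F)
    (hs : s ∉ insert t A') (hsA : insert s (insert t A') ∈ F)
    (hns : insert s A' ∉ F) :
    gpath F (insert s (insert t A')) s = insert s (gpath F (insert t A') t) := by
  set A := insert t A' with hAdef
  obtain ⟨hPF, hPX, hsP, hPmin⟩ := gpath_spec hI hsA (Finset.mem_insert_self s A)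
  set P := gpath F (insert s A) s with hPdef
  have hQF : P.erase s ∈ F := gpath_erase hG hI hA hs hsA
  set Q := P.erase s with hQdef
  have hPQ : P = insert s Q := (Finset.insert_erase hsP).symm
  have hsQ : s ∉ Q := Finset.notMem_erase s P
  have hQA : Q ⊆ A := by
    intro a ha
    have haP : a ∈ P := Finset.mem_of_mem_erase ha
    rcases Finset.mem_insert.1 (hPX haP) with h | h
    · exact absurd (h ▸ ha) hsQ
    · exact h
  -- t belongs to Q
  have htQ : t ∈ Q := by
    by_contra htQ
    have hPsub : P ⊆ insert s A' := by
      intro a ha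
      rcases Finset.mem_insert.1 (hPX ha) with h | h
      · exact h ▸ Finset.mem_insert_self a _
      · rcases Finset.mem_insert.1 h with h' | h'
        · exfalso; apply htQ
          have has : a ≠ s := by
            rintro rfl; rw [h'] at hs; exact hs (Finset.mem_insert_self t A')
          exact h' ▸ Finset.mem_erase.2 ⟨has, ha⟩
        · exact Finset.mem_insert_of_mem h'
    have hunion : A' ∪ P = insert s A' := by
      apply Finset.Subset.antisymm
      · exact Finset.union_subset (Finset.subset_insert s A') hPsub
      · intro a ha
        rcases Finset.mem_insert.1 ha with h | h
        · exact Finset.mem_union_right _ (h ▸ hsP)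
        · exact Finset.mem_union_left _ h
    have : A' ∪ P ∈ F := by
      apply hU A' hA' P hPF
      exact ⟨insert s A, hsA, Finset.union_subset
        ((Finset.subset_insert t A').trans (Finset.subset_insert s A)) hPX⟩
    rw [hunion] at this
    exact hns this
  -- uniqueness of removable elements of Q
  have hrem : ∀ x ∈ Q, ∀ y ∈ Q, Q.erase x ∈ F → Q.erase y ∈ F → x = y := by
    intro x hxQ y hyQ hxrem hyrem
    by_contra hxy
    have hyx : y ≠ x := fun h => hxy h.symm
    have hxQy : x ∈ Q.erase y := Finset.mem_erase.2 ⟨hxy, hxQ⟩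
    have hyQx : y ∈ Q.erase x := Finset.mem_erase.2 ⟨hyx, hyQ⟩
    have hun : Q.erase x ∪ Q.erase y = Q := by
      ext a
      simp only [Finset.mem_union, Finset.mem_erase]
      constructor
      · rintro (⟨_, h⟩ | ⟨_, h⟩) <;> exact h
      · intro ha
        by_cases hax : a = x
        · right
          refine ⟨?_, ha⟩
          intro h
          exact hxy (by rw [← hax]; exact h)
        · left; exact ⟨hax, ha⟩
    have hA₀F : Q.erase x ∩ Q.erase y ∈ F := by
      apply hI _ hxrem _ hyrem
      rw [hun]
      exact ⟨insert s A, hsA, hQA.trans (Finset.subset_insert s A)⟩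
    have hA₀eq : Q.erase x ∩ Q.erase y = (Q.erase x).erase y := by
      rw [Finset.erase_inter, Finset.inter_erase, Finset.inter_self, Finset.erase_right_comm]
    rw [hA₀eq] at hA₀F
    have hcomm : (Q.erase x).erase y = (Q.erase y).erase x := Finset.erase_right_comm
    have hins_x : insert x ((Q.erase x).erase y) = Q.erase y := by
      rw [hcomm, Finset.insert_erase hxQy]
    have hins_y : insert y ((Q.erase x).erase y) = Q.erase x := by
      rw [Finset.insert_erase hyQx]
    have h1 : insert x ((Q.erase x).erase y) ∈ F := by rw [hins_x]; exact hyrem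
    have h2 : insert y ((Q.erase x).erase y) ∈ F := by rw [hins_y]; exact hxrem
    have h3 : insert x (insert y ((Q.erase x).erase y)) ∈ F := by
      rw [hins_y, Finset.insert_erase hxQ]; exact hQF
    have h4 : insert s (insert x (insert y ((Q.erase x).erase y))) ∈ F := by
      rw [hins_y, Finset.insert_erase hxQ, ← hPQ]; exact hPF
    have hcontra : ∀ z ∈ Q, insert s (Q.erase z) ∈ F → False := by
      intro z hzQ hzF
      have hsub : insert s (Q.erase z) ⊆ insert s A :=
        Finset.insert_subset_insert _ ((Finset.erase_subset _ _).trans hQA)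
      have hmin := hPmin _ hzF hsub (Finset.mem_insert_self _ _)
      have hcard := Finset.card_le_card hmin
      have h5 : P.card = Q.card + 1 := by
        rw [hPQ, Finset.card_insert_of_notMem hsQ]
      have h6 : (insert s (Q.erase z)).card ≤ Q.card := by
        calc (insert s (Q.erase z)).card ≤ (Q.erase z).card + 1 := Finset.card_insert_le _ _
        _ = Q.card - 1 + 1 := by rw [Finset.card_erase_of_mem hzQ]
        _ ≤ Q.card := by
            have : 1 ≤ Q.card := Finset.card_pos.2 ⟨z, hzQ⟩
            omega
      omega
    rcases hLF _ hA₀F x y s h1 h2 h3 h4 with h | h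
    · rw [hins_x] at h
      exact hcontra y hyQ h
    · rw [hins_y] at h
      exact hcontra x hxQ h
  -- a removable element exists
  obtain ⟨x₀, hx₀Q, -, hx₀rem⟩ := exists_erase hG hG.1 hQF (Finset.empty_subset _)
    (fun h => by rw [← h] at htQ; exact Finset.notMem_empty t htQ)
  obtain ⟨hDF, hDQ, hx₀D, hDmin⟩ := gpath_spec hI hQF hx₀Q
  have hDeq : gpath F Q x₀ = Q := by
    by_contra hne
    obtain ⟨w, hwQ, hwD, hwrem⟩ := exists_erase hG hDF hQF hDQ hne
    have heq : x₀ = w := hrem x₀ hx₀Q w hwQ hx₀rem hwrem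
    exact hwD (by rw [← heq]; exact hx₀D)
  have hQpath : gpath F A x₀ = Q := by
    rw [gpath_stable hI hQF hA hQA hx₀Q, hDeq]
  have hx₀t : x₀ = t := by
    by_contra hx₀t
    have hx₀A' : x₀ ∈ A' := by
      rcases Finset.mem_insert.1 (hQA hx₀Q) with h | h
      · exact absurd h hx₀t
      · exact h
    have hstab : gpath F A x₀ = gpath F A' x₀ :=
      gpath_stable hI hA' hA (Finset.subset_insert t A') hx₀A'
    have hsubA' : gpath F A' x₀ ⊆ A' := (gpath_spec hI hA' hx₀A').2.1
    have htp : t ∈ gpath F A x₀ := by rw [hQpath]; exact htQ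
    rw [hstab] at htp
    exact ht (hsubA' htp)
  rw [hPQ, ← hQpath, hx₀t]

end Key

section Shadow

variable {F : Set (Finset α)}

lemma sup_feasible (hG : IsGreedoid F) (hU : LocalUnion F) {C : Finset α} (hC : C ∈ F)
    (T : Finset (Finset α)) (h : ∀ X ∈ T, X ∈ F ∧ X ⊆ C) :
    T.sup id ∈ F ∧ T.sup id ⊆ C := by
  classical
  induction T using Finset.induction_on with
  | empty =>
    simp only [Finset.sup_empty, Finset.bot_eq_empty]
    exact ⟨hG.1, Finset.empty_subset C⟩
  | @insert X T hx ih =>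
    rw [Finset.sup_insert]
    obtain ⟨hTF, hTC⟩ := ih (fun Y hY => h Y (Finset.mem_insert_of_mem hY))
    obtain ⟨hXF, hXC⟩ := h X (Finset.mem_insert_self X T)
    have : id X ⊔ T.sup id = X ∪ T.sup id := rfl
    rw [this]
    refine ⟨?_, Finset.union_subset hXC hTC⟩
    exact hU X hXF _ hTF ⟨C, hC, Finset.union_subset hXC hTC⟩

lemma closed_part (hG : IsGreedoid F) (hU : LocalUnion F) (hI : LocalInter F)
    {B : Finset α} (hB : B ∈ F) (U : Finset α) :
    (B.filter (fun y => ∀ u ∈ U, u ∉ gpath F B y)) ∈ F ∧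
      grank F (B \ U) = (B.filter (fun y => ∀ u ∈ U, u ∉ gpath F B y)).card := by
  classical
  set W := B.filter (fun y => ∀ u ∈ U, u ∉ gpath F B y) with hW
  have hWBU : W ⊆ B \ U := by
    intro y hy
    rw [hW, Finset.mem_filter] at hy
    refine Finset.mem_sdiff.2 ⟨hy.1, fun hyU => ?_⟩
    exact hy.2 y hyU (gpath_spec hI hB hy.1).2.2.1
  have hWF : W ∈ F := by
    set T := W.image (fun y => gpath F B y) with hT
    have hTsup : T.sup id = W := by
      apply Finset.Subset.antisymm
      · intro z hz
        rw [Finset.mem_sup] at hz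
        obtain ⟨X, hXT, hzX⟩ := hz
        rw [hT, Finset.mem_image] at hXT
        obtain ⟨y, hyW, rfl⟩ := hXT
        rw [hW, Finset.mem_filter] at hyW ⊢
        have hzB : z ∈ B := (gpath_spec hI hB hyW.1).2.1 hzX
        refine ⟨hzB, fun u hu hupath => ?_⟩
        exact hyW.2 u hu (gpath_trans hI hB hyW.1 hzX hupath)
      · intro y hy
        rw [Finset.mem_sup]
        have hyB : y ∈ B := (Finset.mem_filter.1 (hW ▸ hy)).1
        exact ⟨gpath F B y, Finset.mem_image_of_mem _ hy,
          (gpath_spec hI hB hyB).2.2.1⟩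
    have := sup_feasible hG hU hB T (by
      intro X hX
      rw [hT, Finset.mem_image] at hX
      obtain ⟨y, hyW, rfl⟩ := hX
      have hyB : y ∈ B := (Finset.mem_filter.1 (hW ▸ hyW)).1
      exact ⟨(gpath_spec hI hB hyB).1, (gpath_spec hI hB hyB).2.1⟩)
    rw [hTsup] at this
    exact this.1
  refine ⟨hWF, ?_⟩
  apply le_antisymm
  · apply grank_le hG
    intro X hX hXsub
    have hXW : X ⊆ W := by
      intro y hy
      have hyBU := hXsub hy
      rw [Finset.mem_sdiff] at hyBU
      have hpath : gpath F B y = gpath F X y :=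
        gpath_stable hI hX hB (hXsub.trans Finset.sdiff_subset) hy
      rw [hW, Finset.mem_filter]
      refine ⟨hyBU.1, fun u hu hupath => ?_⟩
      rw [hpath] at hupath
      have hux : u ∈ X := (gpath_spec hI hX hy).2.1 hupath
      have huBU := hXsub hux
      rw [Finset.mem_sdiff] at huBU
      exact huBU.2 hu
    exact Finset.card_le_card hXW
  · exact card_le_grank hWF hWBU

end Shadow

section Primal

variable {F : Set (Finset α)}

lemma sh_count (hG : IsGreedoid F) (hU : LocalUnion F) (hI : LocalInter F)
    {B : Finset α} (hB : B ∈ F) (t : α) :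
    (B.card : ℤ) - (grank F (B.erase t) : ℤ) =
      ((B.filter (fun y => t ∈ gpath F B y)).card : ℤ) := by
  classical
  have h := (closed_part hG hU hI hB {t}).2
  have herase : B.erase t = B \ {t} := Finset.erase_eq B t
  have hWeq : B.filter (fun y => ∀ u ∈ ({t} : Finset α), u ∉ gpath F B y)
      = B.filter (fun y => ¬ t ∈ gpath F B y) := by
    apply Finset.filter_congr
    intro y _
    simp
  have hcards := Finset.card_filter_add_card_filter_not
    (s := B) (p := fun y => t ∈ gpath F B y)
  rw [hWeq] at h
  rw [herase, h]
  omega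

lemma primal_feasible (hG : IsGreedoid F) (hU : LocalUnion F) (hI : LocalInter F)
    {B : Finset α} (hB : B ∈ F) (hrank : grank F Finset.univ = B.card) (U : Finset α) :
    (grank F Finset.univ : ℤ) - (grank F (Finset.univ \ U) : ℤ) ≤
      ∑ s ∈ U, ((B.card : ℤ) - (grank F (B.erase s) : ℤ)) := by
  classical
  rw [Finset.sum_congr rfl (fun s _ => sh_count hG hU hI hB s)]
  have hcount : B.card ≤ (B.filter (fun y => ∀ u ∈ U, u ∉ gpath F B y)).card +
      ∑ s ∈ U, (B.filter (fun y => s ∈ gpath F B y)).card := by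
    have hsum : ∀ s : α, (B.filter (fun y => s ∈ gpath F B y)).card
        = ∑ y ∈ B, if s ∈ gpath F B y then 1 else 0 := fun s => Finset.card_filter _ _
    rw [Finset.sum_congr rfl (fun s _ => hsum s), Finset.sum_comm]
    rw [Finset.card_filter]
    rw [← Finset.sum_add_distrib]
    have hone : B.card = ∑ _y ∈ B, 1 := (Finset.card_eq_sum_ones B)
    rw [hone]
    apply Finset.sum_le_sum
    intro y hy
    by_cases hPy : ∀ u ∈ U, u ∉ gpath F B y
    · rw [if_pos hPy]
      exact Nat.le_add_right 1 _
    · rw [if_neg hPy, zero_add]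
      push_neg at hPy
      obtain ⟨u, huU, hupath⟩ := hPy
      have h1 := Finset.single_le_sum (f := fun s => if s ∈ gpath F B y then (1:ℕ) else 0)
        (fun i _ => Nat.zero_le _) huU
      simp only [if_pos hupath] at h1
      exact h1
  have h2 := (closed_part hG hU hI hB U).2
  have h3 : grank F (B \ U) ≤ grank F (Finset.univ \ U) :=
    grank_mono hG (Finset.sdiff_subset_sdiff (Finset.subset_univ B) le_rfl)
  have hcast : ∑ s ∈ U, ((B.filter (fun y => s ∈ gpath F B y)).card : ℤ)
      = ((∑ s ∈ U, (B.filter (fun y => s ∈ gpath F B y)).card : ℕ) : ℤ) := by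
    push_cast; rfl
  rw [hcast]
  omega

end Primal

section Greedy

variable {F : Set (Finset α)}

/-- cost of attaching `y` to feasible `X`: total cost of the path of `y`. -/
noncomputable def qcost (F : Set (Finset α)) (c : α → ℤ) (X : Finset α) (y : α) : ℤ :=
  ∑ z ∈ gpath F (insert y X) y, c z

lemma greedy_run [Nonempty α] (hG : IsGreedoid F) (c : α → ℤ) :
    ∃ (k : ℕ) (s : ℕ → α),
      (∀ i, i ≤ k → (Finset.range i).image s ∈ F) ∧
      (∀ i, i < k → s i ∉ (Finset.range i).image s) ∧
      (∀ i, i < k → ∀ y, y ∉ (Finset.range i).image s →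
          insert y ((Finset.range i).image s) ∈ F →
          qcost F c ((Finset.range i).image s) (s i) ≤ qcost F c ((Finset.range i).image s) y) ∧
      (∀ y, y ∉ (Finset.range k).image s → insert y ((Finset.range k).image s) ∉ F) := by
  classical
  have main : ∀ n : ℕ, ∃ k, k ≤ n ∧ ∃ s : ℕ → α,
      (∀ i, i ≤ k → (Finset.range i).image s ∈ F) ∧
      (∀ i, i < k → s i ∉ (Finset.range i).image s) ∧
      (∀ i, i < k → ∀ y, y ∉ (Finset.range i).image s →
          insert y ((Finset.range i).image s) ∈ F →
          qcost F c ((Finset.range i).image s) (s i) ≤ qcost F c ((Finset.range i).image s) y) ∧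
      ((∀ y, y ∉ (Finset.range k).image s → insert y ((Finset.range k).image s) ∉ F) ∨ k = n) := by
    intro n
    induction n with
    | zero =>
      refine ⟨0, le_refl 0, (fun _ => Classical.arbitrary _ ), ?_, ?_, ?_, Or.inr rfl⟩
      · intro i hi
        interval_cases i
        simpa using hG.1
      · intro i hi; omega
      · intro i hi; omega
    | succ n ih =>
      obtain ⟨k, hk, s, hfeas, hnew, hgreedy, hterm⟩ := ih
      rcases hterm with hterm | rfl
      · exact ⟨k, hk.trans (Nat.le_succ n), s, hfeas, hnew, hgreedy, Or.inl hterm⟩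
      · by_cases hstop : ∀ y, y ∉ (Finset.range k).image s →
            insert y ((Finset.range k).image s) ∉ F
        · exact ⟨k, Nat.le_succ k, s, hfeas, hnew, hgreedy, Or.inl hstop⟩
        · push_neg at hstop
          obtain ⟨y₀, hy₀, hy₀F⟩ := hstop
          set A := (Finset.range k).image s with hA
          set G := Finset.univ.filter (fun y => y ∉ A ∧ insert y A ∈ F) with hGdef
          have hy₀G : y₀ ∈ G := by
            rw [hGdef, Finset.mem_filter]
            exact ⟨Finset.mem_univ _, hy₀, hy₀F⟩
          obtain ⟨w, hwG, hwmin⟩ := G.exists_min_image (qcost F c A) ⟨y₀, hy₀G⟩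
          rw [hGdef, Finset.mem_filter] at hwG
          set s' : ℕ → α := Function.update s k w with hs'
          have hagree : ∀ i, i ≤ k → (Finset.range i).image s' = (Finset.range i).image s := by
            intro i hi
            apply Finset.image_congr
            intro j hj
            rw [Finset.coe_range, Set.mem_Iio] at hj
            rw [hs']
            exact Function.update_of_ne (by omega) _ _
          have himg : (Finset.range (k+1)).image s' = insert w ((Finset.range k).image s) := by
            rw [Finset.range_add_one, Finset.image_insert, hagree k (le_refl k)]
            congr 1
            rw [hs']
            exact Function.update_self _ _ _
          refine ⟨k+1, by omega, s', ?_, ?_, ?_, Or.inr rfl⟩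
          · intro i hi
            by_cases hik : i ≤ k
            · rw [hagree i hik]; exact hfeas i hik
            · have : i = k + 1 := by omega
              rw [this, himg]
              exact hwG.2.2
          · intro i hi
            by_cases hik : i < k
            · rw [hagree i (le_of_lt hik), hs', Function.update_of_ne (by omega)]
              exact hnew i hik
            · have : i = k := by omega
              subst this
              rw [hagree i (le_refl i), hs', Function.update_self]
              exact hwG.2.1
          · intro i hi y hy hyF
            by_cases hik : i < k
            · rw [hagree i (le_of_lt hik)] at hy hyF ⊢
              rw [hs', Function.update_of_ne (by omega)]
              exact hgreedy i hik y hy hyF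
            · have : i = k := by omega
              subst this
              rw [hagree i (le_refl i)] at hy hyF ⊢
              rw [hs', Function.update_self]
              apply hwmin
              rw [hGdef, Finset.mem_filter]
              exact ⟨Finset.mem_univ _, hy, hyF⟩
  obtain ⟨k, hk, s, hfeas, hnew, hgreedy, hterm⟩ := main (Fintype.card α)
  have hcard : ∀ i, i ≤ k → ((Finset.range i).image s).card = i := by
    intro i hi
    induction i with
    | zero => simp
    | succ i ihc =>
      rw [Finset.range_add_one, Finset.image_insert,
        Finset.card_insert_of_notMem (hnew i (by omega)), ihc (by omega)]
  rcases hterm with hterm | hkeq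
  · exact ⟨k, s, hfeas, hnew, hgreedy, hterm⟩
  · refine ⟨k, s, hfeas, hnew, hgreedy, ?_⟩
    intro y hy
    exfalso
    apply hy
    have huniv : (Finset.range k).image s = Finset.univ := by
      apply Finset.eq_univ_of_card
      rw [hcard k (le_refl k), hkeq]
    rw [huniv]
    exact Finset.mem_univ y
end Greedy

section RunFacts

variable {F : Set (Finset α)}

/-- packaged greedy run -/
structure GRun (F : Set (Finset α)) (c : α → ℤ) (r : ℕ) (s : ℕ → α) : Prop where
  feas : ∀ i, i ≤ r → (Finset.range i).image s ∈ F
  fresh : ∀ i, i < r → s i ∉ (Finset.range i).image s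
  gmin : ∀ i, i < r → ∀ y, y ∉ (Finset.range i).image s →
      insert y ((Finset.range i).image s) ∈ F →
      qcost F c ((Finset.range i).image s) (s i) ≤ qcost F c ((Finset.range i).image s) y
  term : ∀ y, y ∉ (Finset.range r).image s → insert y ((Finset.range r).image s) ∉ F

noncomputable def qqf (F : Set (Finset α)) (c : α → ℤ) (s : ℕ → α) (j : ℕ) : ℤ :=
  if j = 0 then 0 else qcost F c ((Finset.range (j-1)).image s) (s (j-1))

lemma run_mono (s : ℕ → α) {i j : ℕ} (h : i ≤ j) :
    (Finset.range i).image s ⊆ (Finset.range j).image s :=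
  Finset.image_subset_image (by simpa using h)

lemma run_succ (s : ℕ → α) (i : ℕ) :
    (Finset.range (i+1)).image s = insert (s i) ((Finset.range i).image s) := by
  rw [Finset.range_add_one, Finset.image_insert]

lemma run_card {c : α → ℤ} {r : ℕ} {s : ℕ → α} (R : GRun F c r s) :
    ∀ i, i ≤ r → ((Finset.range i).image s).card = i := by
  intro i hi
  induction i with
  | zero => simp
  | succ i ihc =>
    rw [run_succ, Finset.card_insert_of_notMem (R.fresh i (by omega)), ihc (by omega)]

lemma key_step (hG : IsGreedoid F) (hU : LocalUnion F) (hI : LocalInter F)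
    (hLF : LocalForest F) {c : α → ℤ} {r : ℕ} {s : ℕ → α} (R : GRun F c r s)
    {i : ℕ} (hi0 : 0 < i) (hir : i ≤ r) {y : α}
    (hy : y ∉ (Finset.range i).image s)
    (hyF : insert y ((Finset.range i).image s) ∈ F)
    (hyn : insert y ((Finset.range (i-1)).image s) ∉ F) :
    gpath F (insert y ((Finset.range i).image s)) y =
      insert y (gpath F ((Finset.range i).image s) (s (i-1))) := by
  have hstep : (Finset.range i).image s = insert (s (i-1)) ((Finset.range (i-1)).image s) := by
    have h1 : i - 1 + 1 = i := by omega
    have h2 : i - 1 + 1 - 1 = i - 1 := by omega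
    rw [← h1, run_succ, h2]
  rw [hstep] at hy hyF ⊢
  exact key_lemma hG hU hI hLF (R.feas (i-1) (by omega)) (R.fresh (i-1) (by omega))
    (by rw [← hstep]; exact R.feas i hir) hy hyF hyn

lemma qq_zero {c : α → ℤ} (s : ℕ → α) : qqf F c s 0 = 0 := by simp [qqf]

lemma qq_succ {c : α → ℤ} (s : ℕ → α) (i : ℕ) :
    qqf F c s (i+1) = qcost F c ((Finset.range i).image s) (s i) := by
  simp [qqf]

lemma qq_nonneg (hc : ∀ t, 0 ≤ c t) {r : ℕ} {s : ℕ → α} (R : GRun F c r s) :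
    ∀ j, 0 ≤ qqf F c s j := by
  intro j
  cases j with
  | zero => simp [qqf]
  | succ j =>
    rw [qq_succ]
    exact Finset.sum_nonneg (fun z _ => hc z)

lemma qq_mono (hG : IsGreedoid F) (hU : LocalUnion F) (hI : LocalInter F)
    (hLF : LocalForest F) {c : α → ℤ} (hc : ∀ t, 0 ≤ c t) {r : ℕ} {s : ℕ → α}
    (R : GRun F c r s) : ∀ j, j < r → qqf F c s j ≤ qqf F c s (j+1) := by
  intro j hj
  cases j with
  | zero => rw [qq_zero]; exact qq_nonneg hc R 1
  | succ j =>
    -- compare step j and step j+1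
    rw [qq_succ, qq_succ]
    have hyA : s (j+1) ∉ (Finset.range (j+1)).image s := R.fresh (j+1) hj
    have hyF : insert (s (j+1)) ((Finset.range (j+1)).image s) ∈ F := by
      rw [← run_succ]
      exact R.feas (j+2) (by omega)
    by_cases hold : insert (s (j+1)) ((Finset.range j).image s) ∈ F
    · have hyAj : s (j+1) ∉ (Finset.range j).image s :=
        fun h => hyA (run_mono s (by omega) h)
      have hmin := R.gmin j (by omega) (s (j+1)) hyAj hold
      have hstab : gpath F (insert (s (j+1)) ((Finset.range (j+1)).image s)) (s (j+1))
          = gpath F (insert (s (j+1)) ((Finset.range j).image s)) (s (j+1)) := by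
        apply gpath_stable hI hold hyF
        · exact Finset.insert_subset_insert _ (run_mono s (by omega))
        · exact Finset.mem_insert_self _ _
      have heq : qcost F c ((Finset.range (j+1)).image s) (s (j+1))
          = qcost F c ((Finset.range j).image s) (s (j+1)) := by
        rw [qcost, qcost, hstab]
      rw [heq]
      exact hmin
    · have hkey := key_step hG hU hI hLF R (i := j+1) (by omega) (by omega) hyA hyF
        (by simpa using hold)
      rw [show j + 1 - 1 = j from rfl] at hkey
      have hsub : gpath F ((Finset.range (j+1)).image s) (s j) ⊆ (Finset.range (j+1)).image s := by
        have hsj : s j ∈ (Finset.range (j+1)).image s := by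
          rw [run_succ]; exact Finset.mem_insert_self _ _
        exact (gpath_spec hI (R.feas (j+1) (by omega)) hsj).2.1
      have hnotin : s (j+1) ∉ gpath F ((Finset.range (j+1)).image s) (s j) :=
        fun h => hyA (hsub h)
      have hpatheq : gpath F ((Finset.range (j+1)).image s) (s j)
          = gpath F (insert (s j) ((Finset.range j).image s)) (s j) := by
        rw [← run_succ]
      have heq2 : qcost F c ((Finset.range (j+1)).image s) (s (j+1))
          = c (s (j+1)) + qcost F c ((Finset.range j).image s) (s j) := by
        simp only [qcost]
        rw [hkey, Finset.sum_insert hnotin, hpatheq]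
      rw [heq2]
      have hcy := hc (s (j+1))
      linarith

lemma qq_mono_le (hG : IsGreedoid F) (hU : LocalUnion F) (hI : LocalInter F)
    (hLF : LocalForest F) {c : α → ℤ} (hc : ∀ t, 0 ≤ c t) {r : ℕ} {s : ℕ → α}
    (R : GRun F c r s) : ∀ i j, i ≤ j → j ≤ r → qqf F c s i ≤ qqf F c s j := by
  intro i j hij hjr
  induction j with
  | zero =>
    have h0 : i = 0 := by omega
    rw [h0]
  | succ j ihj =>
    by_cases h : i = j + 1
    · rw [h]
    · exact le_trans (ihj (by omega) (by omega)) (qq_mono hG hU hI hLF hc R j (by omega))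

end RunFacts

section Capacity

variable {F : Set (Finset α)}

lemma tele_sum (f : ℕ → ℤ) : ∀ b a, a ≤ b →
    ∑ i ∈ Finset.Icc a b, (f (i+1) - f i) = f (b+1) - f a := by
  intro b
  induction b with
  | zero =>
    intro a ha
    have : a = 0 := by omega
    subst this
    simp
  | succ b ihb =>
    intro a ha
    by_cases hab : a = b + 1
    · subst hab
      rw [Finset.Icc_self, Finset.sum_singleton]
    · have ha' : a ≤ b := by omega
      rw [Finset.sum_Icc_succ_top (by omega), ihb a ha']
      ring

lemma abel_sum (f : ℕ → ℤ) (hf0 : f 0 = 0) (n : ℕ) :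
    ∑ i ∈ Finset.range n, (f (i+1) - f i) * ((n : ℤ) - (i : ℤ)) =
      ∑ i ∈ Finset.range n, f (i+1) := by
  induction n with
  | zero => simp
  | succ n ihn =>
    have hsplit : ∀ i : ℕ, (f (i+1) - f i) * (((n+1 : ℕ) : ℤ) - (i : ℤ))
        = (f (i+1) - f i) * ((n : ℤ) - (i : ℤ)) + (f (i+1) - f i) := by
      intro i; push_cast; ring
    rw [Finset.sum_congr rfl (fun i _ => hsplit i), Finset.sum_add_distrib]
    rw [Finset.sum_range_sub f, hf0, sub_zero]
    rw [Finset.sum_range_succ (fun i => (f (i+1) - f i) * ((n : ℤ) - (i : ℤ)))]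
    rw [sub_self, mul_zero, add_zero, ihn]
    rw [Finset.sum_range_succ (fun i => f (i+1))]

lemma gfin_rank (hG : IsGreedoid F) {c : α → ℤ} {r : ℕ} {s : ℕ → α} (R : GRun F c r s)
    (i : ℕ) (hi : i ≤ r) :
    grank F (Finset.univ \ (Finset.univ.filter
      (fun x => x ∉ (Finset.range i).image s ∧ insert x ((Finset.range i).image s) ∈ F))) ≤ i := by
  classical
  apply grank_le hG
  intro X hX hXsub
  by_contra hlt
  push_neg at hlt
  obtain ⟨w, hwX, hwA, hwF⟩ := hG.2 _ (R.feas i hi) X hX (by rw [run_card R i hi]; omega)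
  have hmem := hXsub hwX
  rw [Finset.mem_sdiff] at hmem
  exact hmem.2 (Finset.mem_filter.2 ⟨Finset.mem_univ _, hwA, hwF⟩)

lemma capacity (hG : IsGreedoid F) (hU : LocalUnion F) (hI : LocalInter F)
    (hLF : LocalForest F) {c : α → ℤ} (hc : ∀ t, 0 ≤ c t) {r : ℕ} {s : ℕ → α}
    (R : GRun F c r s) (y : α) :
    ∑ i ∈ Finset.range r, (if y ∉ (Finset.range i).image s ∧
        insert y ((Finset.range i).image s) ∈ F
      then qqf F c s (i+1) - qqf F c s i else 0) ≤ c y := by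
  classical
  rw [← Finset.sum_filter]
  set I := (Finset.range r).filter (fun i => y ∉ (Finset.range i).image s ∧
      insert y ((Finset.range i).image s) ∈ F) with hI_def
  rcases I.eq_empty_or_nonempty with hIe | hIne
  · rw [hIe, Finset.sum_empty]; exact hc y
  set a := I.min' hIne with ha_def
  set b := I.max' hIne with hb_def
  have haI : a ∈ I := I.min'_mem hIne
  have hbI : b ∈ I := I.max'_mem hIne
  have hab : a ≤ b := I.min'_le b hbI
  have haP := haI; have hbP := hbI
  rw [hI_def, Finset.mem_filter, Finset.mem_range] at haP hbP
  have hsubI : I ⊆ Finset.Icc a b := by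
    intro i hi
    rw [Finset.mem_Icc]
    exact ⟨I.min'_le i hi, I.le_max' i hi⟩
  have h1 : ∑ i ∈ I, (qqf F c s (i+1) - qqf F c s i)
      ≤ ∑ i ∈ Finset.Icc a b, (qqf F c s (i+1) - qqf F c s i) := by
    apply Finset.sum_le_sum_of_subset_of_nonneg hsubI
    intro i hi _
    rw [Finset.mem_Icc] at hi
    have : i < r := by omega
    have := qq_mono hG hU hI hLF hc R i this
    omega
  rw [tele_sum _ b a hab] at h1
  -- greedy bound at step b
  have h2 : qqf F c s (b+1) ≤ qcost F c ((Finset.range b).image s) y := by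
    rw [qq_succ]
    exact R.gmin b hbP.1 y hbP.2.1 hbP.2.2
  -- stability from a to b
  have h3 : qcost F c ((Finset.range b).image s) y
      = qcost F c ((Finset.range a).image s) y := by
    simp only [qcost]
    rw [gpath_stable hI haP.2.2 hbP.2.2
      (Finset.insert_subset_insert _ (run_mono s hab)) (Finset.mem_insert_self _ _)]
  -- entry bound at step a
  have h4 : qcost F c ((Finset.range a).image s) y ≤ qqf F c s a + c y := by
    by_cases ha0 : a = 0
    · have haP' := haP
      rw [ha0] at haP' ⊢
      have hgy : gpath F (insert y ((Finset.range 0).image s)) y = {y} := by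
        apply Finset.Subset.antisymm
        · intro z hz
          have := (gpath_spec hI haP'.2.2 (Finset.mem_insert_self _ _)).2.1 hz
          simpa using this
        · rw [Finset.singleton_subset_iff]
          exact (gpath_spec hI haP'.2.2 (Finset.mem_insert_self _ _)).2.2.1
      rw [qq_zero, zero_add]
      simp only [qcost]
      rw [hgy, Finset.sum_singleton]
    · have ha1 : 0 < a := Nat.pos_of_ne_zero ha0
      have hprev : a - 1 ∉ I := by
        intro hmem
        have := I.min'_le _ hmem
        omega
      have hprev_range : a - 1 < r := by omega
      have hynA : y ∉ (Finset.range (a-1)).image s :=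
        fun h => haP.2.1 (run_mono s (by omega) h)
      have hyn : insert y ((Finset.range (a-1)).image s) ∉ F := by
        intro hmem
        exact hprev (by
          rw [hI_def, Finset.mem_filter, Finset.mem_range]
          exact ⟨hprev_range, hynA, hmem⟩)
      have hkey := key_step hG hU hI hLF R ha1 (le_of_lt haP.1) haP.2.1 haP.2.2 hyn
      have hnotin : y ∉ gpath F ((Finset.range a).image s) (s (a-1)) := by
        intro hmem
        have hsa : s (a-1) ∈ (Finset.range a).image s := by
          have h1 : a - 1 + 1 = a := by omega
          rw [← h1, run_succ]
          exact Finset.mem_insert_self _ _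
        exact haP.2.1 ((gpath_spec hI (R.feas a (by omega)) hsa).2.1 hmem)
      have hins_eq : insert (s (a-1)) ((Finset.range (a-1)).image s)
          = (Finset.range a).image s := by
        have h1 : a - 1 + 1 = a := by omega
        rw [← h1, run_succ, Nat.add_sub_cancel]
      have hqa : qqf F c s a = ∑ z ∈ gpath F ((Finset.range a).image s) (s (a-1)), c z := by
        simp only [qqf, if_neg ha0, qcost, hins_eq]
      have hcalc : qcost F c ((Finset.range a).image s) y = c y + qqf F c s a := by
        simp only [qcost]
        rw [hkey, Finset.sum_insert hnotin, hqa]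
      rw [hcalc]
      linarith
  linarith

end Capacity

section Objective

variable {F : Set (Finset α)}

lemma run_inj {c : α → ℤ} {r : ℕ} {s : ℕ → α} (R : GRun F c r s) :
    ∀ i ∈ Finset.range r, ∀ j ∈ Finset.range r, s i = s j → i = j := by
  have key : ∀ i j, i < j → j < r → s i ≠ s j := by
    intro i j hij hjr heq
    apply R.fresh j hjr
    rw [← heq]
    exact Finset.mem_image_of_mem s (Finset.mem_range.2 hij)
  intro i hi j hj heq
  rw [Finset.mem_range] at hi hj
  rcases lt_trichotomy i j with h | h | h
  · exact absurd heq (key i j h hj)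
  · exact h
  · exact absurd heq.symm (key j i h hi)

lemma base_rank (hG : IsGreedoid F) {c : α → ℤ} {r : ℕ} {s : ℕ → α} (R : GRun F c r s) :
    grank F Finset.univ = r := by
  apply le_antisymm
  · apply grank_le hG
    intro X hX _
    by_contra hlt
    push_neg at hlt
    obtain ⟨w, hwX, hwA, hwF⟩ := hG.2 _ (R.feas r le_rfl) X hX
      (by rw [run_card R r le_rfl]; omega)
    exact R.term w hwA hwF
  · have := card_le_grank (R.feas r le_rfl) (Finset.subset_univ _)
    rwa [run_card R r le_rfl] at this

lemma obj_eq (hG : IsGreedoid F) (hU : LocalUnion F) (hI : LocalInter F)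
    {c : α → ℤ} {r : ℕ} {s : ℕ → α} (R : GRun F c r s) :
    ∑ t : α, c t * ((((Finset.range r).image s).filter
        (fun y => t ∈ gpath F ((Finset.range r).image s) y)).card : ℤ)
      = ∑ i ∈ Finset.range r, qqf F c s (i+1) := by
  classical
  set B := (Finset.range r).image s with hB
  have hBF : B ∈ F := R.feas r le_rfl
  have step1 : ∀ t : α, c t * ((B.filter (fun y => t ∈ gpath F B y)).card : ℤ)
      = ∑ y ∈ B, if t ∈ gpath F B y then c t else 0 := by
    intro t
    rw [Finset.card_filter]
    push_cast
    rw [Finset.mul_sum]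
    apply Finset.sum_congr rfl
    intro y _
    by_cases h : t ∈ gpath F B y <;> simp [h]
  rw [Finset.sum_congr rfl (fun t _ => step1 t), Finset.sum_comm]
  have step2 : ∀ y ∈ B, (∑ t : α, if t ∈ gpath F B y then c t else 0)
      = ∑ t ∈ gpath F B y, c t := by
    intro y _
    rw [Finset.sum_ite_mem, Finset.univ_inter]
  rw [Finset.sum_congr rfl step2]
  rw [hB, Finset.sum_image (run_inj R)]
  apply Finset.sum_congr rfl
  intro i hi
  rw [Finset.mem_range] at hi
  have hsi : s i ∈ (Finset.range (i+1)).image s := by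
    rw [run_succ]; exact Finset.mem_insert_self _ _
  have hstab : gpath F ((Finset.range r).image s) (s i)
      = gpath F ((Finset.range (i+1)).image s) (s i) :=
    gpath_stable hI (R.feas (i+1) (by omega)) (R.feas r le_rfl) (run_mono s (by omega)) hsi
  rw [hstab, qq_succ]
  simp only [qcost]
  rw [run_succ]

lemma weak_duality (hG : IsGreedoid F) {c : α → ℤ} (x' : α → ℝ) (y' : Finset α → ℝ)
    (hx' : ∀ U : Finset α,
      (grank F Finset.univ : ℝ) - (grank F (Finset.univ \ U) : ℝ) ≤ ∑ t ∈ U, x' t)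
    (hy'0 : ∀ U, 0 ≤ y' U)
    (hy'row : ∀ t : α, ∑ U ∈ Finset.univ.powerset.filter (fun U => t ∈ U), y' U = (c t : ℝ)) :
    ∑ U ∈ Finset.univ.powerset,
        y' U * ((grank F Finset.univ : ℝ) - (grank F (Finset.univ \ U) : ℝ))
      ≤ ∑ t : α, (c t : ℝ) * x' t := by
  classical
  have h1 : ∑ U ∈ Finset.univ.powerset,
      y' U * ((grank F Finset.univ : ℝ) - (grank F (Finset.univ \ U) : ℝ))
      ≤ ∑ U ∈ Finset.univ.powerset, y' U * (∑ t ∈ U, x' t) := by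
    apply Finset.sum_le_sum
    intro U _
    exact mul_le_mul_of_nonneg_left (hx' U) (hy'0 U)
  refine h1.trans (le_of_eq ?_)
  have h2 : ∀ U ∈ Finset.univ.powerset, y' U * (∑ t ∈ U, x' t)
      = ∑ t : α, if t ∈ U then y' U * x' t else 0 := by
    intro U _
    rw [Finset.mul_sum]
    rw [Finset.sum_ite_mem, Finset.univ_inter]
  rw [Finset.sum_congr rfl h2, Finset.sum_comm]
  apply Finset.sum_congr rfl
  intro t _
  rw [← hy'row t, Finset.sum_filter, Finset.sum_mul]
  apply Finset.sum_congr rfl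
  intro U _
  by_cases h : t ∈ U <;> simp [h]

end Objective

section Dual

variable {F : Set (Finset α)}

open Classical in
noncomputable def Gfin (F : Set (Finset α)) [DecidablePred (· ∈ F)] (s : ℕ → α) (i : ℕ) : Finset α :=
  Finset.univ.filter (fun x => x ∉ (Finset.range i).image s ∧
    insert x ((Finset.range i).image s) ∈ F)

noncomputable def dualZ (F : Set (Finset α)) [DecidablePred (· ∈ F)] (c : α → ℤ) (r : ℕ)
    (s : ℕ → α) : Finset α → ℤ :=
  fun U => (∑ i ∈ Finset.range r, if U = Gfin F s i then qqf F c s (i+1) - qqf F c s i else 0)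
    + (∑ t : α, if U = {t} then
        (c t - ∑ i ∈ Finset.range r,
          if t ∈ Gfin F s i then qqf F c s (i+1) - qqf F c s i else 0) else 0)

lemma mem_Gfin {s : ℕ → α} {i : ℕ} {t : α} :
    t ∈ Gfin F s i ↔ (t ∉ (Finset.range i).image s ∧
      insert t ((Finset.range i).image s) ∈ F) := by
  rw [Gfin, Finset.mem_filter]
  simp

lemma cov_le (hG : IsGreedoid F) (hU : LocalUnion F) (hI : LocalInter F)
    (hLF : LocalForest F) {c : α → ℤ} (hc : ∀ t, 0 ≤ c t) {r : ℕ} {s : ℕ → α}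
    (R : GRun F c r s) (t : α) :
    ∑ i ∈ Finset.range r, (if t ∈ Gfin F s i then qqf F c s (i+1) - qqf F c s i else 0)
      ≤ c t := by
  have hconv : ∀ i : ℕ,
      (if t ∈ Gfin F s i then qqf F c s (i+1) - qqf F c s i else 0)
      = (if t ∉ (Finset.range i).image s ∧ insert t ((Finset.range i).image s) ∈ F
          then qqf F c s (i+1) - qqf F c s i else 0) := by
    intro i
    by_cases h : t ∈ Gfin F s i
    · rw [if_pos h, if_pos (mem_Gfin.1 h)]
    · rw [if_neg h, if_neg (fun hp => h (mem_Gfin.2 hp))]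
  rw [Finset.sum_congr rfl (fun i _ => hconv i)]
  exact capacity hG hU hI hLF hc R t

lemma dualZ_nonneg (hG : IsGreedoid F) (hU : LocalUnion F) (hI : LocalInter F)
    (hLF : LocalForest F) {c : α → ℤ} (hc : ∀ t, 0 ≤ c t) {r : ℕ} {s : ℕ → α}
    (R : GRun F c r s) (U : Finset α) : 0 ≤ dualZ F c r s U := by
  rw [dualZ]
  apply add_nonneg
  · apply Finset.sum_nonneg
    intro i hi
    rw [Finset.mem_range] at hi
    have := qq_mono hG hU hI hLF hc R i hi
    by_cases h : U = Gfin F s i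
    · rw [if_pos h]; omega
    · rw [if_neg h]
  · apply Finset.sum_nonneg
    intro t _
    by_cases h : U = {t}
    · rw [if_pos h]
      have := cov_le hG hU hI hLF hc R t
      omega
    · rw [if_neg h]

lemma dualZ_row {c : α → ℤ} {r : ℕ} {s : ℕ → α} (t : α) :
    ∑ U ∈ Finset.univ.powerset.filter (fun U => t ∈ U), dualZ F c r s U = c t := by
  classical
  simp only [dualZ]
  rw [Finset.sum_add_distrib]
  have hfirst : ∑ U ∈ Finset.univ.powerset.filter (fun U => t ∈ U),
      (∑ i ∈ Finset.range r, if U = Gfin F s i then qqf F c s (i+1) - qqf F c s i else 0)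
      = ∑ i ∈ Finset.range r,
        (if t ∈ Gfin F s i then qqf F c s (i+1) - qqf F c s i else 0) := by
    rw [Finset.sum_comm]
    apply Finset.sum_congr rfl
    intro i _
    rw [Finset.sum_ite_eq' (Finset.univ.powerset.filter (fun U => t ∈ U)) (Gfin F s i)
      (fun _ => qqf F c s (i+1) - qqf F c s i)]
    congr 1
    rw [Finset.mem_filter, Finset.mem_powerset]
    simp [Finset.subset_univ]
  have hsecond : ∑ U ∈ Finset.univ.powerset.filter (fun U => t ∈ U),
      (∑ t' : α, if U = {t'} then
        (c t' - ∑ i ∈ Finset.range r,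
          if t' ∈ Gfin F s i then qqf F c s (i+1) - qqf F c s i else 0) else 0)
      = c t - ∑ i ∈ Finset.range r,
          (if t ∈ Gfin F s i then qqf F c s (i+1) - qqf F c s i else 0) := by
    rw [Finset.sum_comm]
    have hstep : ∀ t' : α,
        (∑ U ∈ Finset.univ.powerset.filter (fun U => t ∈ U), if U = {t'} then
          (c t' - ∑ i ∈ Finset.range r,
            if t' ∈ Gfin F s i then qqf F c s (i+1) - qqf F c s i else 0) else 0)
        = if t' = t then (c t' - ∑ i ∈ Finset.range r,
            if t' ∈ Gfin F s i then qqf F c s (i+1) - qqf F c s i else 0) else 0 := by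
      intro t'
      rw [Finset.sum_ite_eq' (Finset.univ.powerset.filter (fun U => t ∈ U)) ({t'} : Finset α)
        (fun _ => c t' - ∑ i ∈ Finset.range r,
          if t' ∈ Gfin F s i then qqf F c s (i+1) - qqf F c s i else 0)]
      have hmem : ({t'} : Finset α) ∈ Finset.univ.powerset.filter (fun U => t ∈ U) ↔ t' = t := by
        rw [Finset.mem_filter, Finset.mem_powerset]
        simp only [Finset.subset_univ, true_and, Finset.mem_singleton]
        exact ⟨fun h => h.symm, fun h => h.symm⟩
      by_cases h : t' = t
      · rw [if_pos (hmem.2 h), if_pos h]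
      · rw [if_neg (fun hm => h (hmem.1 hm)), if_neg h]
    rw [Finset.sum_congr rfl (fun t' _ => hstep t')]
    rw [Finset.sum_ite_eq' Finset.univ t]
    rw [if_pos (Finset.mem_univ t)]
  rw [hfirst, hsecond]
  ring

lemma dualZ_obj (hG : IsGreedoid F) (hU : LocalUnion F) (hI : LocalInter F)
    (hLF : LocalForest F) {c : α → ℤ} (hc : ∀ t, 0 ≤ c t) {r : ℕ} {s : ℕ → α}
    (R : GRun F c r s) :
    ∑ i ∈ Finset.range r, qqf F c s (i+1) ≤
      ∑ U ∈ Finset.univ.powerset,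
        dualZ F c r s U * ((grank F Finset.univ : ℤ) - (grank F (Finset.univ \ U) : ℤ)) := by
  classical
  simp only [dualZ]
  rw [Finset.sum_congr rfl (fun (U : Finset α) _ => add_mul
    (∑ i ∈ Finset.range r, if U = Gfin F s i then qqf F c s (i+1) - qqf F c s i else 0)
    (∑ t : α, if U = {t} then
        (c t - ∑ i ∈ Finset.range r,
          if t ∈ Gfin F s i then qqf F c s (i+1) - qqf F c s i else 0) else 0)
    ((grank F Finset.univ : ℤ) - (grank F (Finset.univ \ U) : ℤ)))]
  rw [Finset.sum_add_distrib]
  have hg_nonneg : ∀ U : Finset α,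
      0 ≤ (grank F Finset.univ : ℤ) - (grank F (Finset.univ \ U) : ℤ) := by
    intro U
    have := grank_mono hG (Finset.sdiff_subset (s := Finset.univ) (t := U))
    omega
  have hsecond : 0 ≤ ∑ U ∈ Finset.univ.powerset,
      (∑ t : α, if U = {t} then
        (c t - ∑ i ∈ Finset.range r,
          if t ∈ Gfin F s i then qqf F c s (i+1) - qqf F c s i else 0) else 0) *
      ((grank F Finset.univ : ℤ) - (grank F (Finset.univ \ U) : ℤ)) := by
    apply Finset.sum_nonneg
    intro U _
    apply mul_nonneg _ (hg_nonneg U)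
    apply Finset.sum_nonneg
    intro t _
    by_cases h : U = {t}
    · rw [if_pos h]
      have := cov_le hG hU hI hLF hc R t
      omega
    · rw [if_neg h]
  have hfirst : ∑ i ∈ Finset.range r, qqf F c s (i+1) ≤
      ∑ U ∈ Finset.univ.powerset,
      (∑ i ∈ Finset.range r, if U = Gfin F s i then qqf F c s (i+1) - qqf F c s i else 0) *
      ((grank F Finset.univ : ℤ) - (grank F (Finset.univ \ U) : ℤ)) := by
    have hswap : ∑ U ∈ Finset.univ.powerset,
        (∑ i ∈ Finset.range r, if U = Gfin F s i then qqf F c s (i+1) - qqf F c s i else 0) *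
        ((grank F Finset.univ : ℤ) - (grank F (Finset.univ \ U) : ℤ))
        = ∑ i ∈ Finset.range r, (qqf F c s (i+1) - qqf F c s i) *
          ((grank F Finset.univ : ℤ) - (grank F (Finset.univ \ (Gfin F s i)) : ℤ)) := by
      rw [Finset.sum_congr rfl (fun (U : Finset α) _ => Finset.sum_mul _ _ _), Finset.sum_comm]
      apply Finset.sum_congr rfl
      intro i _
      have hconv : ∀ U ∈ Finset.univ.powerset,
          (if U = Gfin F s i then qqf F c s (i+1) - qqf F c s i else 0) *
            ((grank F Finset.univ : ℤ) - (grank F (Finset.univ \ U) : ℤ))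
          = (if U = Gfin F s i then (qqf F c s (i+1) - qqf F c s i) *
              ((grank F Finset.univ : ℤ) - (grank F (Finset.univ \ U) : ℤ)) else 0) := by
        intro U _
        by_cases h : U = Gfin F s i
        · rw [if_pos h, if_pos h]
        · rw [if_neg h, if_neg h, zero_mul]
      rw [Finset.sum_congr rfl hconv]
      have := Finset.sum_ite_eq' Finset.univ.powerset (Gfin F s i)
        (fun U => (qqf F c s (i+1) - qqf F c s i) *
          ((grank F Finset.univ : ℤ) - (grank F (Finset.univ \ U) : ℤ)))
      rw [this, if_pos (Finset.mem_powerset.2 (Finset.subset_univ _))]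
    rw [hswap]
    have hbound : ∀ i ∈ Finset.range r, (qqf F c s (i+1) - qqf F c s i) * ((r : ℤ) - (i : ℤ))
        ≤ (qqf F c s (i+1) - qqf F c s i) *
          ((grank F Finset.univ : ℤ) - (grank F (Finset.univ \ (Gfin F s i)) : ℤ)) := by
      intro i hi
      rw [Finset.mem_range] at hi
      have hΔ : 0 ≤ qqf F c s (i+1) - qqf F c s i := by
        have := qq_mono hG hU hI hLF hc R i hi
        omega
      apply mul_le_mul_of_nonneg_left _ hΔ
      have h1 : grank F (Finset.univ \ (Gfin F s i)) ≤ i := by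
        have := gfin_rank hG R i (by omega)
        convert this using 3
        ext x; rw [mem_Gfin, Finset.mem_filter]; simp
      have h2 := base_rank hG R
      omega
    calc ∑ i ∈ Finset.range r, qqf F c s (i+1)
        = ∑ i ∈ Finset.range r, (qqf F c s (i+1) - qqf F c s i) * ((r : ℤ) - (i : ℤ)) := by
          rw [abel_sum (qqf F c s) (qq_zero s) r]
      _ ≤ _ := Finset.sum_le_sum hbound
  omega
end Dual

/-- For a local forest greedoid and a non-negative integer weight function, both
the primal linear program and its dual attain their optimum at integer vectors. -/
theorem statement11 (F : Set (Finset α)) (hG : IsGreedoid F)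
    (hU : LocalUnion F) (hI : LocalInter F) (hLF : LocalForest F)
    (c : α → ℤ) (hc : ∀ s, 0 ≤ c s) :
    (∃ x : α → ℝ, (∀ s, ∃ k : ℤ, x s = k) ∧
      (∀ U : Finset α,
        (grank F Finset.univ : ℝ) - (grank F (Finset.univ \ U) : ℝ) ≤ ∑ s ∈ U, x s) ∧
      (∀ x' : α → ℝ,
        (∀ U : Finset α,
          (grank F Finset.univ : ℝ) - (grank F (Finset.univ \ U) : ℝ) ≤ ∑ s ∈ U, x' s) →
        ∑ s : α, (c s : ℝ) * x s ≤ ∑ s : α, (c s : ℝ) * x' s)) ∧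
    (∃ y : Finset α → ℝ, (∀ U, ∃ k : ℤ, y U = k) ∧
      (∀ U, 0 ≤ y U) ∧
      (∀ s : α, ∑ U ∈ Finset.univ.powerset.filter (fun U => s ∈ U), y U = (c s : ℝ)) ∧
      (∀ y' : Finset α → ℝ, (∀ U, 0 ≤ y' U) →
        (∀ s : α, ∑ U ∈ Finset.univ.powerset.filter (fun U => s ∈ U), y' U = (c s : ℝ)) →
        ∑ U ∈ Finset.univ.powerset,
            y' U * ((grank F Finset.univ : ℝ) - (grank F (Finset.univ \ U) : ℝ)) ≤
          ∑ U ∈ Finset.univ.powerset,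
            y U * ((grank F Finset.univ : ℝ) - (grank F (Finset.univ \ U) : ℝ)))) := by
  classical
  cases isEmpty_or_nonempty α with
  | inl hemp =>
    refine ⟨⟨fun _ => 0, fun t => ⟨0, by simp⟩, ?_, ?_⟩,
      ⟨fun _ => 0, fun U => ⟨0, by simp⟩, fun U => le_refl 0, ?_, ?_⟩⟩
    · intro U
      have hU0 : U = ∅ := Finset.eq_empty_of_isEmpty U
      subst hU0
      simp
    · intro x' _
      simp
    · intro t
      exact isEmptyElim t
    · intro y' _ _
      have huniv : (Finset.univ : Finset α) = ∅ := Finset.univ_eq_empty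
      rw [huniv]
      simp
  | inr hne =>
    obtain ⟨r, s, hfeas, hnew, hgreedy, hterm⟩ := greedy_run hG c
    have R : GRun F c r s := ⟨hfeas, hnew, hgreedy, hterm⟩
    set B := (Finset.range r).image s with hBdef
    have hBF : B ∈ F := R.feas r le_rfl
    have hBcard : B.card = r := run_card R r le_rfl
    have hrank : grank F Finset.univ = B.card := by rw [hBcard]; exact base_rank hG R
    set xz : α → ℤ := fun t => (B.card : ℤ) - (grank F (B.erase t) : ℤ) with hxz
    set xr : α → ℝ := fun t => ((xz t : ℤ) : ℝ) with hxr
    set yr : Finset α → ℝ := fun U => ((dualZ F c r s U : ℤ) : ℝ) with hyr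
    set V : ℤ := ∑ i ∈ Finset.range r, qqf F c s (i+1) with hV
    have hobj : ∑ t : α, c t * xz t = V := by
      have h1 : ∀ t : α, c t * xz t
          = c t * ((B.filter (fun y => t ∈ gpath F B y)).card : ℤ) := by
        intro t
        rw [hxz]
        simp only []
        rw [sh_count hG hU hI hBF t]
      rw [Finset.sum_congr rfl (fun t _ => h1 t), hV, hBdef]
      exact obj_eq hG hU hI R
    have hfeasx : ∀ U : Finset α,
        (grank F Finset.univ : ℝ) - (grank F (Finset.univ \ U) : ℝ) ≤ ∑ t ∈ U, xr t := by
      intro U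
      have h := primal_feasible hG hU hI hBF hrank U
      simp only [hxr, hxz]
      push_cast
      exact_mod_cast h
    have hrowR : ∀ t : α,
        ∑ U ∈ Finset.univ.powerset.filter (fun U => t ∈ U), yr U = (c t : ℝ) := by
      intro t
      simp only [hyr]
      rw [← dualZ_row (F := F) (c := c) (r := r) (s := s) t]
      push_cast
      rfl
    have hnnR : ∀ U, 0 ≤ yr U := by
      intro U
      simp only [hyr]
      exact_mod_cast dualZ_nonneg hG hU hI hLF hc R U
    have hvalx : ∑ t : α, (c t : ℝ) * xr t = (V : ℝ) := by
      simp only [hxr]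
      rw [← hobj]
      push_cast
      rfl
    have hvaly : (V : ℝ) ≤ ∑ U ∈ Finset.univ.powerset,
        yr U * ((grank F Finset.univ : ℝ) - (grank F (Finset.univ \ U) : ℝ)) := by
      have h := dualZ_obj hG hU hI hLF hc R
      simp only [hyr, hV]
      push_cast
      exact_mod_cast h
    refine ⟨⟨xr, fun t => ⟨xz t, rfl⟩, hfeasx, ?_⟩,
      ⟨yr, fun U => ⟨dualZ F c r s U, rfl⟩, hnnR, hrowR, ?_⟩⟩
    · intro x' hx'
      calc ∑ t : α, (c t : ℝ) * xr t = (V : ℝ) := hvalx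
        _ ≤ ∑ U ∈ Finset.univ.powerset,
            yr U * ((grank F Finset.univ : ℝ) - (grank F (Finset.univ \ U) : ℝ)) := hvaly
        _ ≤ ∑ t : α, (c t : ℝ) * x' t := weak_duality hG x' yr hx' hnnR hrowR
    · intro y' hy'0 hy'row
      calc ∑ U ∈ Finset.univ.powerset,
            y' U * ((grank F Finset.univ : ℝ) - (grank F (Finset.univ \ U) : ℝ))
          ≤ ∑ t : α, (c t : ℝ) * xr t := weak_duality hG xr y' hfeasx hy'0 hy'row
        _ = (V : ℝ) := hvalx
        _ ≤ _ := hvaly
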